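/- Let d ≥ 1 be an integer and let H be a finite family of d-intervals. Then the covering number and the fractional covering number satisfy τ(H) ≤ d · τ*(H). -/

import Mathlib

/-- A `d`-interval: a nonempty subset of `ℝ` that is a union of at most `d`
closed bounded intervals. -/
def IsDInterval (d : ℕ) (s : Set ℝ) : Prop :=
  s.Nonempty ∧ ∃ P : Finset (ℝ × ℝ), P.card ≤ d ∧ s = ⋃ I ∈ P, Set.Icc I.1 I.2

/-- A finite family `H` of sets satisfies the `(p,q)` property if among every
`p` distinct members of `H` some `q` have a point in common. -/
def HasPQProperty (H : Finset (Set ℝ)) (p q : ℕ) : Prop :=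
  ∀ S ⊆ H, S.card = p → ∃ T ⊆ S, T.card = q ∧ (⋂ h ∈ T, (h : Set ℝ)).Nonempty

/-- The covering number `τ(H)`: the minimum cardinality of a finite set of
points meeting every member of `H`. -/
noncomputable def coverNum (H : Finset (Set ℝ)) : ℕ :=
  sInf { n : ℕ | ∃ C : Finset ℝ, C.card = n ∧ ∀ h ∈ H, ∃ x ∈ C, x ∈ h }

/-- The fractional covering number `τ*(H)`: the infimum of total weights of
finitely supported fractional covers of `H`. -/
noncomputable def fracCoverNum (H : Finset (Set ℝ)) : ℝ :=
  sInf { t : ℝ | ∃ w : ℝ →₀ ℝ, (∀ x, 0 ≤ w x) ∧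
    (∀ h ∈ H, 1 ≤ ∑ x ∈ w.support, Set.indicator h (fun y => w y) x) ∧
    t = ∑ x ∈ w.support, w x }

open Finset

/-- Greedy stabbing lemma for intervals: if every interval in `S` carries
`w`-mass at least `1/d` (within the point set `A`), then there is a stabbing
set of size at most `d` times the total mass. -/
lemma greedy_stab (d : ℕ) (hd : 1 ≤ d) (w : ℝ → ℝ) :
    ∀ n : ℕ, ∀ S : Finset (ℝ × ℝ), ∀ A : Finset ℝ, S.card ≤ n →
    (∀ x ∈ A, 0 ≤ w x) →
    (∀ I ∈ S, (1:ℝ)/d ≤ ∑ x ∈ A.filter (fun x => x ∈ Set.Icc I.1 I.2), w x) →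
    ∃ C : Finset ℝ, (C.card : ℝ)/d ≤ ∑ x ∈ A, w x ∧
      ∀ I ∈ S, ∃ x ∈ C, x ∈ Set.Icc I.1 I.2 := by
  intro n
  induction n with
  | zero =>
    intro S A hcard hw _
    have hS : S = ∅ := Finset.card_eq_zero.mp (Nat.le_zero.mp hcard)
    refine ⟨∅, by simpa using Finset.sum_nonneg hw, by simp [hS]⟩
  | succ n ih =>
    intro S A hcard hw hmass
    rcases S.eq_empty_or_nonempty with rfl | hSne
    · exact ⟨∅, by simpa using Finset.sum_nonneg hw, by simp⟩
    have hdpos : (0:ℝ) < d := by exact_mod_cast hd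
    obtain ⟨I₀, hI₀S, hI₀min⟩ := S.exists_min_image Prod.snd hSne
    set b := I₀.2 with hb
    have hI₀ne : I₀.1 ≤ b := by
      by_contra h
      have hempty : A.filter (fun x => x ∈ Set.Icc I₀.1 I₀.2) = ∅ := by
        apply Finset.filter_false_of_mem
        intro x _ hx
        exact h (hx.1.trans hx.2)
      have h2 := hmass I₀ hI₀S
      rw [hempty, Finset.sum_empty] at h2
      have : (0:ℝ) < 1/d := by positivity
      linarith
    set S₂ := S.filter (fun I => b < I.1) with hS₂
    set A' := A.filter (fun x => b < x) with hA'
    have hS₂ss : S₂ ⊂ S := Finset.filter_ssubset.mpr ⟨I₀, hI₀S, not_lt.mpr hI₀ne⟩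
    have hS₂card : S₂.card ≤ n := by
      have := Finset.card_lt_card hS₂ss
      omega
    have hmass2 : ∀ I ∈ S₂, (1:ℝ)/d ≤ ∑ x ∈ A'.filter (fun x => x ∈ Set.Icc I.1 I.2), w x := by
      intro I hI
      have hbI : b < I.1 := (Finset.mem_filter.mp hI).2
      have heq : A'.filter (fun x => x ∈ Set.Icc I.1 I.2)
          = A.filter (fun x => x ∈ Set.Icc I.1 I.2) := by
        rw [hA', Finset.filter_filter]
        apply Finset.filter_congr
        intro x _
        constructor
        · exact fun h => h.2
        · exact fun h => ⟨lt_of_lt_of_le hbI h.1, h⟩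
      rw [heq]
      exact hmass I (Finset.mem_filter.mp hI).1
    obtain ⟨C', hC'le, hC'stab⟩ := ih S₂ A' hS₂card
      (fun x hx => hw x (Finset.mem_filter.mp hx).1) hmass2
    refine ⟨insert b C', ?_, ?_⟩
    · have hsplit : ∑ x ∈ A, w x
          = ∑ x ∈ A.filter (fun x => b < x), w x + ∑ x ∈ A.filter (fun x => ¬ b < x), w x :=
        (Finset.sum_filter_add_sum_filter_not A _ w).symm
      have hsub : A.filter (fun x => x ∈ Set.Icc I₀.1 I₀.2) ⊆ A.filter (fun x => ¬ b < x) := by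
        intro x hx
        simp only [Finset.mem_filter] at hx ⊢
        exact ⟨hx.1, not_lt.mpr hx.2.2⟩
      have h1 : 1/(d:ℝ) ≤ ∑ x ∈ A.filter (fun x => ¬ b < x), w x :=
        le_trans (hmass I₀ hI₀S)
          (Finset.sum_le_sum_of_subset_of_nonneg hsub
            (fun x hx _ => hw x (Finset.mem_filter.mp hx).1))
      have hcard' : ((insert b C').card : ℝ) ≤ (C'.card : ℝ) + 1 := by
        exact_mod_cast Finset.card_insert_le _ _
      have hdiv : ((insert b C').card : ℝ)/d ≤ (C'.card : ℝ)/d + 1/d := by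
        rw [← add_div]
        gcongr
      rw [hsplit]
      linarith
    · intro I hIS
      by_cases hI : b < I.1
      · obtain ⟨x, hx, hxI⟩ := hC'stab I (Finset.mem_filter.mpr ⟨hIS, hI⟩)
        exact ⟨x, Finset.mem_insert_of_mem hx, hxI⟩
      · exact ⟨b, Finset.mem_insert_self _ _, ⟨not_lt.mp hI, hI₀min I hIS⟩⟩

/-- From a fractional cover, each `d`-interval contains a closed interval
carrying mass at least `1/d`. -/
lemma exists_good_interval (d : ℕ) (hd : 1 ≤ d) (w : ℝ →₀ ℝ) (hw : ∀ x, 0 ≤ w x)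
    (h : Set ℝ) (hh : IsDInterval d h)
    (hcov : 1 ≤ ∑ x ∈ w.support, Set.indicator h (fun y => w y) x) :
    ∃ I : ℝ × ℝ, Set.Icc I.1 I.2 ⊆ h ∧
      (1:ℝ)/d ≤ ∑ x ∈ w.support.filter (fun x => x ∈ Set.Icc I.1 I.2), w x := by
  classical
  obtain ⟨hne, P, hPd, hEq⟩ := hh
  have hdpos : (0:ℝ) < d := by exact_mod_cast hd
  have hL : ∑ x ∈ w.support, Set.indicator h (fun y => w y) x
      = ∑ x ∈ w.support, (if x ∈ h then w x else 0) := by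
    apply Finset.sum_congr rfl
    intro x _
    simp [Set.indicator_apply]
  have hsub : ∑ x ∈ w.support, (if x ∈ h then w x else 0)
      ≤ ∑ I ∈ P, ∑ x ∈ w.support.filter (fun x => x ∈ Set.Icc I.1 I.2), w x := by
    have hrw : ∀ I : ℝ × ℝ, ∑ x ∈ w.support.filter (fun x => x ∈ Set.Icc I.1 I.2), w x
        = ∑ x ∈ w.support, (if x ∈ Set.Icc I.1 I.2 then w x else 0) :=
      fun I => Finset.sum_filter _ _
    rw [Finset.sum_congr rfl (fun I _ => hrw I), Finset.sum_comm]
    apply Finset.sum_le_sum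
    intro x _
    by_cases hxh : x ∈ h
    · simp only [if_pos hxh]
      have hxh' := hxh
      rw [hEq] at hxh'
      simp only [Set.mem_iUnion] at hxh'
      obtain ⟨I, hIP, hxI⟩ := hxh'
      calc w x = (if x ∈ Set.Icc I.1 I.2 then w x else 0) := by rw [if_pos hxI]
        _ ≤ ∑ I ∈ P, (if x ∈ Set.Icc I.1 I.2 then w x else 0) :=
          Finset.single_le_sum (f := fun J : ℝ × ℝ => if x ∈ Set.Icc J.1 J.2 then w x else 0)
            (fun J _ => by split <;> [exact hw x; exact le_rfl]) hIP
    · simp only [if_neg hxh]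
      exact Finset.sum_nonneg fun J _ => by split <;> [exact hw x; exact le_rfl]
  have hPne : P.Nonempty := by
    rcases P.eq_empty_or_nonempty with rfl | hP
    · exfalso
      rw [hEq] at hne
      simp at hne
    · exact hP
  have hIsub : ∀ I ∈ P, Set.Icc I.1 I.2 ⊆ h := by
    intro I hIP
    rw [hEq]
    intro x hx
    exact Set.mem_biUnion hIP hx
  by_contra hcon
  push_neg at hcon
  have hlt : ∑ I ∈ P, ∑ x ∈ w.support.filter (fun x => x ∈ Set.Icc I.1 I.2), w x
      < ∑ I ∈ P, (1:ℝ)/d :=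
    Finset.sum_lt_sum_of_nonempty hPne (fun I hIP => hcon I (hIsub I hIP))
  have hconst : ∑ I ∈ P, (1:ℝ)/d = (P.card : ℝ) * (1/d) := by
    rw [Finset.sum_const, nsmul_eq_mul]
  have hle1 : (P.card : ℝ) * (1/d) ≤ 1 := by
    have : (P.card : ℝ) ≤ d := by exact_mod_cast hPd
    rw [mul_one_div, div_le_one hdpos]
    exact this
  rw [hL] at hcov
  linarith

theorem cover_le_d_mul_fracCover (d : ℕ) (hd : 1 ≤ d)
    (H : Finset (Set ℝ)) (hH : ∀ s ∈ H, IsDInterval d s) :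
    (coverNum H : ℝ) ≤ (d : ℝ) * fracCoverNum H := by
  classical
  have hdpos : (0:ℝ) < d := by exact_mod_cast hd
  set T := { t : ℝ | ∃ w : ℝ →₀ ℝ, (∀ x, 0 ≤ w x) ∧
    (∀ h ∈ H, 1 ≤ ∑ x ∈ w.support, Set.indicator h (fun y => w y) x) ∧
    t = ∑ x ∈ w.support, w x } with hT
  -- T is nonempty
  have hTne : T.Nonempty := by
    choose f hf using fun (h : Set ℝ) (hh : h ∈ H) => (hH h hh).1
    set C0 : Finset ℝ := H.attach.image (fun h => f h.1 h.2) with hC0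
    set w : ℝ →₀ ℝ := Finsupp.indicator C0 (fun _ _ => (1:ℝ)) with hwdef
    have hwapp : ∀ x, w x = if x ∈ C0 then (1:ℝ) else 0 := by
      intro x
      rw [hwdef]
      by_cases hx : x ∈ C0
      · rw [if_pos hx, Finsupp.indicator_of_mem hx]
      · rw [if_neg hx, Finsupp.indicator_of_notMem hx]
    have hw0 : ∀ x, 0 ≤ w x := by
      intro x
      rw [hwapp]
      split <;> norm_num
    refine ⟨∑ x ∈ w.support, w x, w, hw0, ?_, rfl⟩
    intro h hh
    set x₀ := f h hh with hx₀
    have hx₀C : x₀ ∈ C0 := by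
      rw [hC0]
      exact Finset.mem_image.mpr ⟨⟨h, hh⟩, Finset.mem_attach _ _, rfl⟩
    have hwx₀ : w x₀ = 1 := by rw [hwapp, if_pos hx₀C]
    have hx₀s : x₀ ∈ w.support := by
      rw [Finsupp.mem_support_iff, hwx₀]
      norm_num
    have hterm : Set.indicator h (fun y => w y) x₀ = 1 := by
      rw [Set.indicator_of_mem (hf h hh)]
      exact hwx₀
    calc (1:ℝ) = Set.indicator h (fun y => w y) x₀ := hterm.symm
      _ ≤ ∑ x ∈ w.support, Set.indicator h (fun y => w y) x :=
        Finset.single_le_sum (fun x _ => Set.indicator_nonneg (fun y _ => hw0 y) x) hx₀s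
  -- every feasible weight gives a bound
  have hlb : ∀ t ∈ T, (coverNum H : ℝ)/d ≤ t := by
    rintro t ⟨w, hw0, hcov, rfl⟩
    have hgood := fun h hh => exists_good_interval d hd w hw0 h (hH h hh) (hcov h hh)
    choose! f hf1 hf2 using hgood
    have hmassS : ∀ I ∈ H.image f, (1:ℝ)/d ≤ ∑ x ∈ w.support.filter (fun x => x ∈ Set.Icc I.1 I.2), w x := by
      intro I hI
      obtain ⟨h, hh, rfl⟩ := Finset.mem_image.mp hI
      exact hf2 h hh
    obtain ⟨C, hCle, hCstab⟩ := greedy_stab d hd w (H.image f).card (H.image f) w.support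
      le_rfl (fun x _ => hw0 x) hmassS
    have hτ : coverNum H ≤ C.card := by
      apply Nat.sInf_le
      refine ⟨C, rfl, fun h hh => ?_⟩
      obtain ⟨x, hxC, hxI⟩ := hCstab (f h) (Finset.mem_image_of_mem f hh)
      exact ⟨x, hxC, hf1 h hh hxI⟩
    calc (coverNum H : ℝ)/d ≤ (C.card : ℝ)/d := by
          have : (coverNum H : ℝ) ≤ (C.card : ℝ) := by exact_mod_cast hτ
          gcongr
      _ ≤ _ := hCle
  have hdivle : (coverNum H : ℝ)/d ≤ fracCoverNum H := by
    rw [fracCoverNum, ← hT]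
    exact le_csInf hTne hlb
  rw [div_le_iff₀ hdpos] at hdivle
  linarith [hdivle]
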